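/- Let α ∈ ℂⁿ ⊗ ℂᵐ be a unit vector (in the Hilbert space norm). Then ‖α‖_π = 1 in the projective Banach space tensor norm if and only if there exist scalars t₁,...,tₛ ≥ 0 with Σᵣ tᵣ = 1 and unit vectors y₁,...,yₛ ∈ ℂⁿ, z₁,...,zₛ ∈ ℂᵐ such that α = Σᵣ tᵣ yᵣ ⊗ zᵣ. -/

import Mathlib

noncomputable def eucTensor {n m : ℕ} (y : EuclideanSpace ℂ (Fin n))
    (z : EuclideanSpace ℂ (Fin m)) : EuclideanSpace ℂ (Fin n × Fin m) :=
  (WithLp.equiv 2 _).symm fun p => y p.1 * z p.2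

noncomputable def eucProjNorm (n m : ℕ) (u : EuclideanSpace ℂ (Fin n × Fin m)) : ℝ :=
  sInf {r | ∃ (k : ℕ) (y : Fin k → EuclideanSpace ℂ (Fin n))
    (z : Fin k → EuclideanSpace ℂ (Fin m)),
    u = ∑ i, eucTensor (y i) (z i) ∧ r = ∑ i, ‖y i‖ * ‖z i‖}

section Aux
variable {n m : ℕ}

lemma eucTensor_apply (y : EuclideanSpace ℂ (Fin n)) (z : EuclideanSpace ℂ (Fin m))
    (p : Fin n × Fin m) : eucTensor y z p = y p.1 * z p.2 := rfl

lemma eucTensor_ext {u v : EuclideanSpace ℂ (Fin n × Fin m)}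
    (h : ∀ p, u p = v p) : u = v := WithLp.ofLp_injective 2 (funext h)

lemma eucTensor_smul_left (c : ℂ) (y : EuclideanSpace ℂ (Fin n))
    (z : EuclideanSpace ℂ (Fin m)) : eucTensor (c • y) z = c • eucTensor y z := by
  apply eucTensor_ext
  intro p
  simp [eucTensor_apply, PiLp.smul_apply, smul_eq_mul, mul_assoc]

lemma eucTensor_smul_right (c : ℂ) (y : EuclideanSpace ℂ (Fin n))
    (z : EuclideanSpace ℂ (Fin m)) : eucTensor y (c • z) = c • eucTensor y z := by
  apply eucTensor_ext
  intro p
  simp [eucTensor_apply, PiLp.smul_apply, smul_eq_mul]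
  ring

lemma eucTensor_zero_left (z : EuclideanSpace ℂ (Fin m)) :
    eucTensor (0 : EuclideanSpace ℂ (Fin n)) z = 0 := by
  apply eucTensor_ext
  intro p
  simp [eucTensor_apply, PiLp.zero_apply]

lemma eucTensor_zero_right (y : EuclideanSpace ℂ (Fin n)) :
    eucTensor y (0 : EuclideanSpace ℂ (Fin m)) = 0 := by
  apply eucTensor_ext
  intro p
  simp [eucTensor_apply, PiLp.zero_apply]

lemma norm_eucTensor (y : EuclideanSpace ℂ (Fin n)) (z : EuclideanSpace ℂ (Fin m)) :
    ‖eucTensor y z‖ = ‖y‖ * ‖z‖ := by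
  rw [EuclideanSpace.norm_eq, EuclideanSpace.norm_eq, EuclideanSpace.norm_eq,
    ← Real.sqrt_mul (by positivity)]
  congr 1
  rw [Finset.sum_mul_sum, Fintype.sum_prod_type]
  simp [eucTensor_apply, norm_mul, mul_pow]

lemma eucTensor_real_smul_left (a : ℝ) (y : EuclideanSpace ℂ (Fin n))
    (z : EuclideanSpace ℂ (Fin m)) : eucTensor (a • y) z = a • eucTensor y z := by
  rw [← Complex.coe_smul, ← Complex.coe_smul, eucTensor_smul_left]

lemma eucTensor_real_smul_right (a : ℝ) (y : EuclideanSpace ℂ (Fin n))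
    (z : EuclideanSpace ℂ (Fin m)) : eucTensor y (a • z) = a • eucTensor y z := by
  rw [← Complex.coe_smul, ← Complex.coe_smul, eucTensor_smul_right]

lemma continuous_eucTensor :
    Continuous (fun yz : EuclideanSpace ℂ (Fin n) × EuclideanSpace ℂ (Fin m) =>
      eucTensor yz.1 yz.2) := by
  apply (PiLp.continuous_toLp 2 (fun _ : Fin n × Fin m => ℂ)).comp
  apply continuous_pi
  intro p
  exact ((continuous_apply p.1).comp ((PiLp.continuous_ofLp 2 _).comp continuous_fst)).mul
    ((continuous_apply p.2).comp ((PiLp.continuous_ofLp 2 _).comp continuous_snd))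

/-- Key renormalization identity. -/
lemma eucTensor_key (c : ℝ) (y : EuclideanSpace ℂ (Fin n)) (z : EuclideanSpace ℂ (Fin m)) :
    (c * (‖y‖ * ‖z‖)) • eucTensor (‖y‖⁻¹ • y) (‖z‖⁻¹ • z) = c • eucTensor y z := by
  by_cases hy : y = 0
  · simp [hy, eucTensor_zero_left, smul_zero]
  by_cases hz : z = 0
  · simp [hz, eucTensor_zero_right, smul_zero]
  rw [eucTensor_real_smul_left, eucTensor_real_smul_right, smul_smul, smul_smul]
  congr 1
  have h1 : ‖y‖ ≠ 0 := norm_ne_zero_iff.mpr hy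
  have h2 : ‖z‖ ≠ 0 := norm_ne_zero_iff.mpr hz
  field_simp

lemma norm_normalize_le (y : EuclideanSpace ℂ (Fin n)) : ‖‖y‖⁻¹ • y‖ ≤ 1 := by
  rcases eq_or_ne y 0 with h | h
  · simp [h]
  · rw [norm_smul, Real.norm_eq_abs, abs_inv, abs_norm,
      inv_mul_cancel₀ (norm_ne_zero_iff.mpr h)]

lemma sum_extend {ι κ M : Type*} [Fintype ι] [Fintype κ] [DecidableEq κ] [AddCommMonoid M]
    (f : ι ↪ κ) (g : ι → M) : ∑ j, Function.extend ⇑f g 0 j = ∑ i, g i := by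
  classical
  rw [show (Finset.univ : Finset κ) = Finset.univ.image ⇑f ∪ (Finset.univ.image ⇑f)ᶜ by simp,
    Finset.sum_union disjoint_compl_right]
  have h1 : ∑ j ∈ Finset.univ.image ⇑f, Function.extend ⇑f g 0 j = ∑ i, g i := by
    rw [Finset.sum_image (fun a _ b _ hab => f.injective hab)]
    exact Finset.sum_congr rfl fun i _ => f.injective.extend_apply g 0 i
  have h2 : ∑ j ∈ (Finset.univ.image ⇑f)ᶜ, Function.extend ⇑f g 0 j = 0 := by
    apply Finset.sum_eq_zero
    intro j hj
    have hj' : ¬∃ i, f i = j := by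
      simpa using Finset.mem_compl.mp hj
    rw [Function.extend_apply' g (0 : κ → M) j hj']
    rfl
  rw [h1, h2, add_zero]

end Aux

theorem projNorm_eq_one_iff_convex_combination (n m : ℕ)
    (α : EuclideanSpace ℂ (Fin n × Fin m)) (hα : ‖α‖ = 1) :
    eucProjNorm n m α = 1 ↔
      ∃ (s : ℕ) (t : Fin s → ℝ) (y : Fin s → EuclideanSpace ℂ (Fin n))
        (z : Fin s → EuclideanSpace ℂ (Fin m)),
        (∀ r, 0 ≤ t r) ∧ (∑ r, t r) = 1 ∧ (∀ r, ‖y r‖ = 1) ∧ (∀ r, ‖z r‖ = 1) ∧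
        α = ∑ r, (t r : ℂ) • eucTensor (y r) (z r) := by
  classical
  set T : Set ℝ := {r | ∃ (k : ℕ) (y : Fin k → EuclideanSpace ℂ (Fin n))
    (z : Fin k → EuclideanSpace ℂ (Fin m)),
    α = ∑ i, eucTensor (y i) (z i) ∧ r = ∑ i, ‖y i‖ * ‖z i‖} with hT
  have hpn : eucProjNorm n m α = sInf T := rfl
  have hTlb : ∀ r ∈ T, (1 : ℝ) ≤ r := by
    rintro r ⟨k, y, z, hu, hr⟩
    calc (1 : ℝ) = ‖α‖ := hα.symm
      _ ≤ ∑ i, ‖eucTensor (y i) (z i)‖ := hu ▸ norm_sum_le _ _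
      _ = r := by
          rw [hr]
          exact Finset.sum_congr rfl fun i _ => norm_eucTensor _ _
  constructor
  · intro h
    rw [hpn] at h
    have hTne : T.Nonempty := by
      by_contra hne
      rw [Set.not_nonempty_iff_eq_empty] at hne
      rw [hne, Real.sInf_empty] at h
      norm_num at h
    have hne' : Nonempty (Fin n × Fin m) := by
      by_contra he
      rw [not_nonempty_iff] at he
      rw [EuclideanSpace.norm_eq, Finset.univ_eq_empty, Finset.sum_empty,
        Real.sqrt_zero] at hα
      norm_num at hα
    obtain ⟨p0⟩ := hne'
    set S : Set (EuclideanSpace ℂ (Fin n × Fin m)) :=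
      {w | ∃ (y : EuclideanSpace ℂ (Fin n)) (z : EuclideanSpace ℂ (Fin m)),
        ‖y‖ ≤ 1 ∧ ‖z‖ ≤ 1 ∧ w = eucTensor y z} with hS
    set N : ℕ := Module.finrank ℝ (EuclideanSpace ℂ (Fin n × Fin m)) + 1 with hN
    set Φ : (Fin N → ℝ) × ((Fin N → EuclideanSpace ℂ (Fin n)) ×
        (Fin N → EuclideanSpace ℂ (Fin m))) → EuclideanSpace ℂ (Fin n × Fin m) :=
      fun wyz => ∑ i, wyz.1 i • eucTensor (wyz.2.1 i) (wyz.2.2 i) with hΦ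
    set C : Set ((Fin N → ℝ) × ((Fin N → EuclideanSpace ℂ (Fin n)) ×
        (Fin N → EuclideanSpace ℂ (Fin m)))) :=
      stdSimplex ℝ (Fin N) ×ˢ ((Set.univ.pi fun _ => Metric.closedBall 0 1) ×ˢ
        (Set.univ.pi fun _ => Metric.closedBall 0 1)) with hC
    have hΦcont : Continuous Φ := by
      apply continuous_finset_sum
      intro i _
      have h2 : Continuous (fun a : (Fin N → ℝ) × ((Fin N → EuclideanSpace ℂ (Fin n)) ×
          (Fin N → EuclideanSpace ℂ (Fin m))) =>
          ((a.2.1 i, a.2.2 i) : EuclideanSpace ℂ (Fin n) × EuclideanSpace ℂ (Fin m))) :=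
        (((continuous_apply i).comp (continuous_fst.comp continuous_snd)).prodMk
          ((continuous_apply i).comp (continuous_snd.comp continuous_snd)))
      have h3 := continuous_eucTensor.comp h2
      exact ((continuous_apply i).comp continuous_fst).smul h3
    have hCcomp : IsCompact C :=
      (isCompact_stdSimplex _ _).prod
        ((isCompact_univ_pi fun _ => isCompact_closedBall 0 1).prod
          (isCompact_univ_pi fun _ => isCompact_closedBall 0 1))
    have hKcomp : IsCompact (Φ '' C) := hCcomp.image hΦcont
    have hSK : convexHull ℝ S ⊆ Φ '' C := by
      intro x hx
      obtain ⟨ι, hfin, zz, w, hrange, hai, hwpos, hwsum, hxeq⟩ :=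
        eq_pos_convex_span_of_mem_convexHull hx
      have hcard : Fintype.card ι ≤ N := by
        rcases isEmpty_or_nonempty ι with hι | hι
        · simp [Fintype.card_eq_zero]
        · have := hai.finrank_vectorSpan_add_one
          have hle : Module.finrank ℝ (vectorSpan ℝ (Set.range zz)) ≤
              Module.finrank ℝ (EuclideanSpace ℂ (Fin n × Fin m)) :=
            Submodule.finrank_le _
          omega
      obtain ⟨f⟩ : Nonempty (ι ↪ Fin N) :=
        Function.Embedding.nonempty_of_card_le (by simpa using hcard)
      choose Y Z hY1 hZ1 hYZ using fun i : ι => hrange (Set.mem_range_self i)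
      refine ⟨⟨Function.extend ⇑f w 0, Function.extend ⇑f Y 0, Function.extend ⇑f Z 0⟩,
        ⟨⟨?_, ?_⟩, ?_, ?_⟩, ?_⟩
      · dsimp only
        intro j
        by_cases hj : ∃ i, f i = j
        · obtain ⟨i, rfl⟩ := hj
          rw [f.injective.extend_apply]
          exact (hwpos i).le
        · rw [Function.extend_apply' w (0 : Fin N → ℝ) j hj]
          rfl
      · dsimp only
        rw [sum_extend f w, hwsum]
      · dsimp only
        intro j _
        by_cases hj : ∃ i, f i = j
        · obtain ⟨i, rfl⟩ := hj
          rw [f.injective.extend_apply]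
          simpa [Metric.mem_closedBall, dist_zero_right] using hY1 i
        · rw [Function.extend_apply' Y (0 : Fin N → EuclideanSpace ℂ (Fin n)) j hj]
          simp
      · dsimp only
        intro j _
        by_cases hj : ∃ i, f i = j
        · obtain ⟨i, rfl⟩ := hj
          rw [f.injective.extend_apply]
          simpa [Metric.mem_closedBall, dist_zero_right] using hZ1 i
        · rw [Function.extend_apply' Z (0 : Fin N → EuclideanSpace ℂ (Fin m)) j hj]
          simp
      · rw [hΦ]
        dsimp only
        rw [← hxeq]
        have hpt : ∀ j, Function.extend ⇑f w 0 j •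
            eucTensor (Function.extend ⇑f Y 0 j) (Function.extend ⇑f Z 0 j) =
            Function.extend ⇑f (fun i => w i • zz i) 0 j := by
          intro j
          by_cases hj : ∃ i, f i = j
          · obtain ⟨i, rfl⟩ := hj
            rw [f.injective.extend_apply, f.injective.extend_apply,
              f.injective.extend_apply, f.injective.extend_apply, ← hYZ i]
          · rw [Function.extend_apply' w (0 : Fin N → ℝ) j hj,
              Function.extend_apply' (fun i => w i • zz i)
                (0 : Fin N → EuclideanSpace ℂ (Fin n × Fin m)) j hj]
            show (0 : Fin N → ℝ) j • _ = (0 : Fin N → EuclideanSpace ℂ (Fin n × Fin m)) j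
            simp
        calc ∑ j, Function.extend ⇑f w 0 j •
              eucTensor (Function.extend ⇑f Y 0 j) (Function.extend ⇑f Z 0 j)
            = ∑ j, Function.extend ⇑f (fun i => w i • zz i) 0 j :=
              Finset.sum_congr rfl fun j _ => hpt j
          _ = ∑ i, w i • zz i := sum_extend f _
    have hmem : ∀ r ∈ T, r⁻¹ • α ∈ convexHull ℝ S := by
      rintro r ⟨k, y, z, hu, hr⟩
      have hr1 : (1 : ℝ) ≤ r := hTlb r ⟨k, y, z, hu, hr⟩
      have hrpos : (0 : ℝ) < r := lt_of_lt_of_le one_pos hr1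
      have heq : r⁻¹ • α = ∑ i, (r⁻¹ * (‖y i‖ * ‖z i‖)) •
          eucTensor (‖y i‖⁻¹ • y i) (‖z i‖⁻¹ • z i) := by
        rw [hu, Finset.smul_sum]
        exact Finset.sum_congr rfl fun i _ => (eucTensor_key r⁻¹ (y i) (z i)).symm
      rw [heq]
      apply (convex_convexHull ℝ S).sum_mem
      · intro i _
        positivity
      · rw [← Finset.mul_sum, ← hr, inv_mul_cancel₀ hrpos.ne']
      · intro i _
        exact subset_convexHull ℝ S ⟨_, _, norm_normalize_le _, norm_normalize_le _, rfl⟩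
    have hαK : α ∈ Φ '' C := by
      rw [← hKcomp.isClosed.closure_eq, Metric.mem_closure_iff]
      intro ε hε
      have hlt : sInf T < 1 + ε := by rw [h]; linarith
      obtain ⟨r, hrT, hrlt⟩ := (csInf_lt_iff ⟨1, hTlb⟩ hTne).mp hlt
      refine ⟨r⁻¹ • α, hSK (hmem r hrT), ?_⟩
      have hr1 : (1 : ℝ) ≤ r := hTlb r hrT
      have hrpos : (0 : ℝ) < r := lt_of_lt_of_le one_pos hr1
      have h2 : r * r⁻¹ = 1 := mul_inv_cancel₀ hrpos.ne'
      rw [dist_eq_norm, show α - r⁻¹ • α = (1 - r⁻¹) • α by rw [sub_smul, one_smul],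
        norm_smul, hα, mul_one, Real.norm_eq_abs,
        abs_of_nonneg (by nlinarith : (0:ℝ) ≤ 1 - r⁻¹)]
      nlinarith [sq_nonneg (r - 1)]
    obtain ⟨⟨w, Y, Z⟩, ⟨hw, hYm, hZm⟩, hαeq⟩ := hαK
    obtain ⟨hw0, hw1⟩ := hw
    have hYle : ∀ i, ‖Y i‖ ≤ 1 := fun i => by
      simpa [Metric.mem_closedBall, dist_zero_right] using hYm i (Set.mem_univ i)
    have hZle : ∀ i, ‖Z i‖ ≤ 1 := fun i => by
      simpa [Metric.mem_closedBall, dist_zero_right] using hZm i (Set.mem_univ i)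
    set t' : Fin N → ℝ := fun i => w i * (‖Y i‖ * ‖Z i‖) with ht'
    set u : Fin N → EuclideanSpace ℂ (Fin n) :=
      fun i => if Y i = 0 then EuclideanSpace.single p0.1 1 else ‖Y i‖⁻¹ • Y i with hu
    set v : Fin N → EuclideanSpace ℂ (Fin m) :=
      fun i => if Z i = 0 then EuclideanSpace.single p0.2 1 else ‖Z i‖⁻¹ • Z i with hv
    have hunorm : ∀ i, ‖u i‖ = 1 := by
      intro i
      by_cases hy : Y i = 0
      · simp [hu, hy, EuclideanSpace.norm_single]
      · simp only [hu, if_neg hy]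
        rw [norm_smul, Real.norm_eq_abs, abs_inv, abs_norm,
          inv_mul_cancel₀ (norm_ne_zero_iff.mpr hy)]
    have hvnorm : ∀ i, ‖v i‖ = 1 := by
      intro i
      by_cases hz : Z i = 0
      · simp [hv, hz, EuclideanSpace.norm_single]
      · simp only [hv, if_neg hz]
        rw [norm_smul, Real.norm_eq_abs, abs_inv, abs_norm,
          inv_mul_cancel₀ (norm_ne_zero_iff.mpr hz)]
    have hkey : ∀ i, t' i • eucTensor (u i) (v i) = w i • eucTensor (Y i) (Z i) := by
      intro i
      by_cases hy : Y i = 0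
      · simp [ht', hu, hy, eucTensor_zero_left]
      by_cases hz : Z i = 0
      · simp [ht', hv, hz, eucTensor_zero_right]
      simp only [ht', hu, hv, if_neg hy, if_neg hz]
      exact eucTensor_key (w i) (Y i) (Z i)
    have hα2 : α = ∑ i, t' i • eucTensor (u i) (v i) := by
      rw [← hαeq]
      exact (Finset.sum_congr rfl fun i _ => hkey i).symm
    have hsum1 : ∑ i, t' i = 1 := by
      apply le_antisymm
      · calc ∑ i, t' i ≤ ∑ i, w i := by
              apply Finset.sum_le_sum
              intro i _
              have hq : ‖Y i‖ * ‖Z i‖ ≤ 1 := by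
                nlinarith [norm_nonneg (Y i), norm_nonneg (Z i), hYle i, hZle i]
              exact mul_le_of_le_one_right (hw0 i) hq
          _ = 1 := hw1
      · calc (1 : ℝ) = ‖α‖ := hα.symm
          _ ≤ ∑ i, ‖t' i • eucTensor (u i) (v i)‖ := hα2 ▸ norm_sum_le _ _
          _ = ∑ i, t' i := by
              refine Finset.sum_congr rfl fun i _ => ?_
              rw [norm_smul, norm_eucTensor, hunorm i, hvnorm i, Real.norm_eq_abs,
                abs_of_nonneg (mul_nonneg (hw0 i) (by positivity))]
              ring
    refine ⟨N, t', u, v, fun i => mul_nonneg (hw0 i) (by positivity), hsum1,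
      hunorm, hvnorm, ?_⟩
    rw [hα2]
    exact Finset.sum_congr rfl fun i _ => by rw [Complex.coe_smul]
  · rintro ⟨s, t, y, z, ht0, ht1, hy, hz, hα'⟩
    have hone : (1 : ℝ) ∈ T := by
      refine ⟨s, fun i => (t i : ℂ) • y i, z, ?_, ?_⟩
      · rw [hα']
        exact Finset.sum_congr rfl fun i _ => (eucTensor_smul_left _ _ _).symm
      · rw [← ht1]
        refine Finset.sum_congr rfl fun i _ => ?_
        rw [norm_smul, hy i, hz i, Complex.norm_real, Real.norm_eq_abs,
          abs_of_nonneg (ht0 i)]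
        ring
    rw [hpn]
    exact le_antisymm (csInf_le ⟨1, hTlb⟩ hone) (le_csInf ⟨1, hone⟩ hTlb)
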